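/- Every nonzero codeword of the simplex code has Hamming weight exactly 2^{b−1}: for every X ∈ K with X ≠ 0, the number of c ∈ V* with Φ_E(X)(c) = 1 equals 2^{b−1}. -/
import Mathlib

lemma zmod2_ne_zero : ∀ {x : ZMod 2}, x ≠ 0 → x = 1 := by decide

lemma aux_count (b : ℕ) (hb : 1 ≤ b) (w : Fin b → ZMod 2) (hw : w ≠ 0) :
    Nat.card {v : Fin b → ZMod 2 // ∑ e : Fin b, v e * w e = 1} = 2 ^ (b - 1) := by
  classical
  set f : (Fin b → ZMod 2) → ZMod 2 := fun v => ∑ e : Fin b, v e * w e with hf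
  obtain ⟨e0, he0⟩ := Function.ne_iff.mp hw
  simp only [Pi.zero_apply] at he0
  have he0' : w e0 = 1 := zmod2_ne_zero he0
  set s : Fin b → ZMod 2 := Pi.single e0 1 with hs
  have hfs : f s = 1 := by
    simp [hf, hs, Finset.sum_eq_single e0, Pi.single_apply, he0']
  have hadd : ∀ v, f (v + s) = f v + 1 := by
    intro v
    have : f (v + s) = f v + f s := by
      simp [hf, add_mul, Finset.sum_add_distrib]
    rw [this, hfs]
  have hss : ∀ v : Fin b → ZMod 2, v + s + s = v := by
    intro v
    funext e
    have : (s e) + (s e) = 0 := by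
      have : ∀ x : ZMod 2, x + x = 0 := by decide
      exact this _
    simp [add_assoc, this]
  -- count via filter
  have hcard : Nat.card {v : Fin b → ZMod 2 // f v = 1}
      = (Finset.univ.filter (fun v => f v = 1)).card := by
    rw [Nat.card_eq_fintype_card, Fintype.card_subtype]
  have hbij : (Finset.univ.filter (fun v => f v = 0)).card
      = (Finset.univ.filter (fun v => f v = 1)).card := by
    refine Finset.card_bij' (fun v _ => v + s) (fun v _ => v + s) ?_ ?_ ?_ ?_
    · intro v hv
      simp only [Finset.mem_filter, Finset.mem_univ, true_and] at hv ⊢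
      rw [hadd, hv]; ring
    · intro v hv
      simp only [Finset.mem_filter, Finset.mem_univ, true_and] at hv ⊢
      rw [hadd, hv]; decide
    · intro v _; exact hss v
    · intro v _; exact hss v
  have htotal : (Finset.univ.filter (fun v => f v = 0)).card
      + (Finset.univ.filter (fun v => f v = 1)).card = 2 ^ b := by
    have heq : (Finset.univ.filter (fun v => f v = 1))
        = (Finset.univ.filter (fun v => ¬ f v = 0)) := by
      apply Finset.filter_congr
      intro v _
      constructor
      · intro h; rw [h]; decide
      · intro h; exact zmod2_ne_zero h
    rw [heq, Finset.card_filter_add_card_filter_not (p := fun v => f v = 0)]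
    simp [Fintype.card_fun]
  have h2 : 2 * (Finset.univ.filter (fun v => f v = 1)).card = 2 ^ b := by
    omega
  have hpow : 2 ^ b = 2 * 2 ^ (b - 1) := by
    rw [← pow_succ']
    congr 1
    omega
  rw [hcard]
  omega

theorem simplex_nonzero_codeword_weight (b : ℕ) (hb : 1 ≤ b)
    (ΦB : GaloisField 2 b ≃ₗ[ZMod 2] (Fin b → ZMod 2))
    (ΦE : GaloisField 2 b → ({v : Fin b → ZMod 2 // v ≠ 0} → ZMod 2))
    (hΦE : ∀ (X : GaloisField 2 b) (c : {v : Fin b → ZMod 2 // v ≠ 0}),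
      ΦE X c = ∑ e : Fin b, (c : Fin b → ZMod 2) e * ΦB X e)
    (X : GaloisField 2 b) (hX : X ≠ 0) :
    Nat.card {c : {v : Fin b → ZMod 2 // v ≠ 0} // ΦE X c = 1} = 2 ^ (b - 1) := by
  classical
  have hw : ΦB X ≠ 0 := fun h => hX (by simpa using ΦB.injective (by simpa using h))
  have hequiv : {c : {v : Fin b → ZMod 2 // v ≠ 0} // ΦE X c = 1}
      ≃ {v : Fin b → ZMod 2 // ∑ e : Fin b, v e * ΦB X e = 1} := by
    refine ⟨fun c => ⟨c.1.1, by rw [← hΦE]; exact c.2⟩,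
      fun v => ⟨⟨v.1, ?_⟩, by rw [hΦE]; exact v.2⟩, fun c => rfl, fun v => rfl⟩
    intro h0
    have := v.2
    rw [h0] at this
    simp at this
  rw [Nat.card_congr hequiv]
  exact aux_count b hb (ΦB X) hw
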